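/- For nonnegative integers i ≥ j ≥ 1 and p ≥ 1, one has {i+p-1, j+p-1}_{p-1} = (1/j!) Σ_{k=j}^{i} (-1)^{k-j} k! {i+p, k+p}_p, where {n,m}_r denotes the r-Stirling number of the second kind. -/
import Mathlib


open Finset

/-- The `r`-Stirling numbers of the second kind: `rS2 r i j = {i+r, j+r}_r`,
with generating function `∑_i {i+r, j+r}_r t^i/i! = (1/j!) e^{rt}(e^t-1)^j`. -/
def rS2 (r : ℕ) : ℕ → ℕ → ℕ
  | 0, 0 => 1
  | 0, _ + 1 => 0
  | i + 1, 0 => r * rS2 r i 0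
  | i + 1, j + 1 => (j + 1 + r) * rS2 r i (j + 1) + rS2 r i j

lemma rS2_eq_zero (r : ℕ) : ∀ i j, i < j → rS2 r i j = 0
  | 0, _ + 1, _ => rfl
  | i + 1, j + 1, h => by
    rw [rS2, rS2_eq_zero r i (j + 1) (by omega), rS2_eq_zero r i j (by omega)]
    ring

lemma rS2_aux (r : ℕ) : ∀ i m, rS2 (r + 1) i m = (m + 1) * rS2 r i (m + 1) + rS2 r i m
  | 0, 0 => by simp [rS2]
  | 0, m + 1 => by simp [rS2]
  | i + 1, 0 => by
    rw [rS2, rS2_aux r i 0]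
    show _ = 1 * ((0 + 1 + r) * rS2 r i 1 + rS2 r i 0) + r * rS2 r i 0
    ring
  | i + 1, m + 1 => by
    rw [rS2, rS2_aux r i (m + 1), rS2_aux r i m]
    show _ = (m + 2) * ((m + 1 + 1 + r) * rS2 r i (m + 2) + rS2 r i (m + 1)) +
        ((m + 1 + r) * rS2 r i (m + 1) + rS2 r i m)
    ring

lemma rS2_main_sum (i p : ℕ) (hp : 1 ≤ p) : ∀ j,
    (Nat.factorial j : ℚ) * rS2 (p - 1) i j =
      ∑ k ∈ Finset.Icc j i, (-1) ^ (k - j) * (Nat.factorial k : ℚ) * (rS2 p i k : ℚ) := by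
  intro j
  generalize hd : i + 1 - j = d
  induction d generalizing j with
  | zero =>
    rw [rS2_eq_zero (p - 1) i j (by omega), Finset.Icc_eq_empty (by omega)]
    simp
  | succ d ih =>
    have hji : j ≤ i := by omega
    have hins : Finset.Icc j i = insert j (Finset.Icc (j + 1) i) := by
      rw [Finset.Icc_add_one_left_eq_Ioc, Finset.Ioc_insert_left hji]
    rw [hins, Finset.sum_insert (by simp)]
    have hcongr : ∑ k ∈ Finset.Icc (j + 1) i, (-1 : ℚ) ^ (k - j) * (Nat.factorial k : ℚ) * (rS2 p i k : ℚ)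
        = -∑ k ∈ Finset.Icc (j + 1) i, (-1 : ℚ) ^ (k - (j + 1)) * (Nat.factorial k : ℚ) * (rS2 p i k : ℚ) := by
      rw [← Finset.sum_neg_distrib]
      refine Finset.sum_congr rfl fun k hk => ?_
      have hk' : j + 1 ≤ k := (Finset.mem_Icc.mp hk).1
      have : k - j = (k - (j + 1)) + 1 := by omega
      rw [this, pow_succ]
      ring
    rw [hcongr, ← ih (j + 1) (by omega)]
    have haux := rS2_aux (p - 1) i j
    rw [Nat.sub_add_cancel hp] at haux
    rw [haux]
    push_cast [Nat.factorial_succ]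
    simp only [Nat.sub_self, pow_zero]
    ring

theorem rStirlingSecond_alternating_sum (i j p : ℕ) (hj : 1 ≤ j) (hij : j ≤ i) (hp : 1 ≤ p) :
    (rS2 (p - 1) i j : ℚ) =
      (1 / (Nat.factorial j : ℚ)) *
        ∑ k ∈ Finset.Icc j i, (-1) ^ (k - j) * (Nat.factorial k : ℚ) * (rS2 p i k : ℚ) := by
  rw [← rS2_main_sum i p hp j]
  have h : (Nat.factorial j : ℚ) ≠ 0 := Nat.cast_ne_zero.mpr (Nat.factorial_ne_zero j)
  field_simp
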